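/- Let k be a field with a valuation v into a linearly ordered abelian group with zero Γ ∪ {0} (multiplicative notation), let Γ' ⊇ Γ be an ordered group extension, r ∈ Γ', and a, a' ∈ k. Let w_{a,r} and w_{a',r} be the monomial valuations on k[t] of radius r centered at a and a' respectively, defined by w_{a,r}(Σᵢ cᵢ (t−a)ⁱ) = maxᵢ v(cᵢ)·rⁱ. Then w_{a,r} = w_{a',r} as functions on k[t] if and only if v(a − a') ≤ r. -/

import Mathlib

open Polynomial

/-- The monomial valuation of radius `r` centered at `a`:
`w_{a,r}(Σ cᵢ (t−a)ⁱ) = maxᵢ v(cᵢ)·rⁱ`, computed via the expansion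
`f = Σᵢ cᵢ (t − a)ⁱ` with `cᵢ = coeff i (f.comp (X + C a))`. -/
noncomputable def monomialVal {k : Type*} [Field k] {G : Type*} [CommGroup G] [LinearOrder G] [IsOrderedMonoid G]
    (v : Valuation k (WithZero G)) (r : G) (a : k) (f : Polynomial k) : WithZero G :=
  (f.comp (X + C a)).support.sup
    (fun i => v ((f.comp (X + C a)).coeff i) * ((r : WithZero G)) ^ i)

section aux
variable {k : Type*} [Field k] {G : Type*} [CommGroup G] [LinearOrder G] [IsOrderedMonoid G]
  (v : Valuation k (WithZero G)) (r : G)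

lemma val_natCast_le_one (n : ℕ) : v (n : k) ≤ 1 := by
  induction n with
  | zero => simp
  | succ n ih =>
    push_cast
    exact v.map_add_le ih (le_of_eq v.map_one)

noncomputable def Fval (p : Polynomial k) : WithZero G :=
  p.support.sup fun i => v (p.coeff i) * (r : WithZero G) ^ i

lemma term_le_Fval (p : Polynomial k) (i : ℕ) :
    v (p.coeff i) * (r : WithZero G) ^ i ≤ Fval v r p := by
  by_cases h : p.coeff i = 0
  · simp [h]
  · exact Finset.le_sup (f := fun i => v (p.coeff i) * (r : WithZero G) ^ i)
      (mem_support_iff.mpr h)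

lemma monomialVal_eq_Fval (a : k) (f : Polynomial k) :
    monomialVal v r a f = Fval v r (f.comp (X + C a)) := rfl

lemma Fval_comp_le {c : k} (hc : v c ≤ (r : WithZero G)) (g : Polynomial k) :
    Fval v r (g.comp (X + C c)) ≤ Fval v r g := by
  apply Finset.sup_le
  intro i _
  rw [← taylor_apply, taylor_coeff, eval_eq_sum_range]
  have hr : (0 : WithZero G) < (r : WithZero G) ^ i :=
    zero_lt_iff.mpr (pow_ne_zero _ (by simp))
  rw [← le_div_iff₀ hr]
  apply Valuation.map_sum_le
  intro j _
  rw [le_div_iff₀ hr, hasseDeriv_coeff]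
  calc v (↑((j + i).choose i) * g.coeff (j + i) * c ^ j) * (r : WithZero G) ^ i
      = v ↑((j + i).choose i) * (v (g.coeff (j + i)) * ((v c) ^ j * (r : WithZero G) ^ i)) := by
        rw [v.map_mul, v.map_mul, v.map_pow, mul_assoc, mul_assoc]
    _ ≤ 1 * (v (g.coeff (j + i)) * ((r : WithZero G) ^ j * (r : WithZero G) ^ i)) :=
        mul_le_mul' (val_natCast_le_one v _)
          (mul_le_mul' le_rfl (mul_le_mul' (pow_le_pow_left' hc j) le_rfl))
    _ = v (g.coeff (j + i)) * (r : WithZero G) ^ (j + i) := by rw [one_mul, ← pow_add]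
    _ ≤ Fval v r g := term_le_Fval v r g _

end aux

/-- Two monomial valuations of the same radius `r` centered at `a` and `a'` coincide
iff `v(a − a') ≤ r`. -/
theorem stmt_15 {k : Type*} [Field k] {G : Type*} [CommGroup G] [LinearOrder G] [IsOrderedMonoid G]
    (v : Valuation k (WithZero G)) (r : G) (a a' : k) :
    (∀ f : Polynomial k, monomialVal v r a f = monomialVal v r a' f) ↔
      v (a - a') ≤ (r : WithZero G) := by
  constructor
  · intro h
    have key := h (X - C a')
    have h1 : (X - C a' : Polynomial k).comp (X + C a') = X := by
      simp [sub_comp]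
    have h2 : (X - C a' : Polynomial k).comp (X + C a) = X + C (a - a') := by
      rw [sub_comp, X_comp, C_comp, C_sub]; ring
    rw [monomialVal_eq_Fval, monomialVal_eq_Fval, h1, h2] at key
    have hr : Fval v r (X : Polynomial k) = (r : WithZero G) := by
      simp [Fval, support_X]
    have := term_le_Fval v r (X + C (a - a')) 0
    simp only [coeff_add, coeff_X_zero, coeff_C_zero, zero_add, pow_zero, mul_one] at this
    calc v (a - a') ≤ Fval v r (X + C (a - a')) := this
      _ = (r : WithZero G) := by rw [key, hr]
  · intro hc f
    have e1 : f.comp (X + C a) = (f.comp (X + C a')).comp (X + C (a - a')) := by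
      rw [comp_assoc]
      congr 1
      rw [add_comp, X_comp, C_comp, C_sub]; ring
    have e2 : f.comp (X + C a') = (f.comp (X + C a)).comp (X + C (a' - a)) := by
      rw [comp_assoc]
      congr 1
      rw [add_comp, X_comp, C_comp, C_sub]; ring
    have hc' : v (a' - a) ≤ (r : WithZero G) := by rwa [v.map_sub_swap]
    rw [monomialVal_eq_Fval, monomialVal_eq_Fval]
    apply le_antisymm
    · rw [e1]; exact Fval_comp_le v r hc _
    · rw [e2]; exact Fval_comp_le v r hc' _
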